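/- Let G be a finite simple graph of order n ≥ 5 and let Ḡ be its complement. Then γ_cer(G) + γ_cer(Ḡ) ≤ n + 2 and γ_cer(G) · γ_cer(Ḡ) ≤ 2n. Moreover, the following are equivalent: (a) γ_cer(G) + γ_cer(Ḡ) = n + 2; (b) γ_cer(G) · γ_cer(Ḡ) = 2n; (c) G or Ḡ is the corona of some graph, i.e., every vertex of G, or every vertex of Ḡ, is either a leaf or is adjacent to exactly one leaf. -/

import Mathlib

set_option linter.unusedSectionVars false
set_option maxHeartbeats 1000000


open Finset

variable {V : Type*} [Fintype V] [DecidableEq V]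

/-- `D` is a dominating set of `G`: every vertex outside `D` has a neighbour in `D`. -/
def IsDomSet (G : SimpleGraph V) (D : Finset V) : Prop :=
  ∀ v ∉ D, ∃ u ∈ D, G.Adj u v

/-- `D` is a certified dominating set of `G`: it is dominating and every vertex of `D`
has either zero or at least two neighbours outside `D`. -/
def IsCertDomSet (G : SimpleGraph V) [DecidableRel G.Adj] (D : Finset V) : Prop :=
  IsDomSet G D ∧ ∀ v ∈ D, (G.neighborFinset v \ D).card = 0 ∨ 2 ≤ (G.neighborFinset v \ D).card

/-- The domination number: minimum cardinality of a dominating set. -/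
noncomputable def gamma (G : SimpleGraph V) : ℕ :=
  sInf {n | ∃ D : Finset V, IsDomSet G D ∧ D.card = n}

/-- The certified domination number: minimum cardinality of a certified dominating set. -/
noncomputable def gammaCer (G : SimpleGraph V) [DecidableRel G.Adj] : ℕ :=
  sInf {n | ∃ D : Finset V, IsCertDomSet G D ∧ D.card = n}

/-- A leaf is a vertex of degree one. -/
abbrev IsLeaf (G : SimpleGraph V) [DecidableRel G.Adj] (v : V) : Prop := G.degree v = 1

/-- The set of leaf-neighbours of a vertex. -/
abbrev leafNbrs (G : SimpleGraph V) [DecidableRel G.Adj] (v : V) : Finset V :=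
  (G.neighborFinset v).filter (fun l => G.degree l = 1)

/-- A weak support is a vertex adjacent to exactly one leaf. -/
abbrev IsWeakSupport (G : SimpleGraph V) [DecidableRel G.Adj] (v : V) : Prop :=
  (leafNbrs G v).card = 1

/-- A strong support is a vertex adjacent to at least two leaves. -/
abbrev IsStrongSupport (G : SimpleGraph V) [DecidableRel G.Adj] (v : V) : Prop :=
  2 ≤ (leafNbrs G v).card

lemma isCertDomSet_univ (G : SimpleGraph V) [DecidableRel G.Adj] : IsCertDomSet G univ := by
  constructor
  · intro v hv; simp at hv
  · intro v _; left; simp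

lemma gammaCer_le (G : SimpleGraph V) [DecidableRel G.Adj] {D : Finset V}
    (h : IsCertDomSet G D) : gammaCer G ≤ D.card :=
  Nat.sInf_le ⟨D, h, rfl⟩

lemma gamma_le (G : SimpleGraph V) {D : Finset V} (h : IsDomSet G D) : gamma G ≤ D.card :=
  Nat.sInf_le ⟨D, h, rfl⟩

lemma gammaCer_exists (G : SimpleGraph V) [DecidableRel G.Adj] :
    ∃ D : Finset V, IsCertDomSet G D ∧ D.card = gammaCer G :=
  Nat.sInf_mem (⟨(univ : Finset V).card, univ, isCertDomSet_univ G, rfl⟩ :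
    Set.Nonempty {n | ∃ D : Finset V, IsCertDomSet G D ∧ D.card = n})

lemma isDomSet_univ (G : SimpleGraph V) : IsDomSet G univ := by
  intro v hv; simp at hv

lemma gamma_exists (G : SimpleGraph V) :
    ∃ D : Finset V, IsDomSet G D ∧ D.card = gamma G :=
  Nat.sInf_mem (⟨(univ : Finset V).card, univ, isDomSet_univ G, rfl⟩ :
    Set.Nonempty {n | ∃ D : Finset V, IsDomSet G D ∧ D.card = n})

lemma gammaCer_le_card (G : SimpleGraph V) [DecidableRel G.Adj] :
    gammaCer G ≤ Fintype.card V := by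
  simpa using gammaCer_le G (isCertDomSet_univ G)

lemma gamma_le_gammaCer (G : SimpleGraph V) [DecidableRel G.Adj] :
    gamma G ≤ gammaCer G := by
  obtain ⟨D, hD, hc⟩ := gammaCer_exists G
  calc gamma G ≤ D.card := gamma_le G hD.1
  _ = _ := hc

lemma leaf_eq {G : SimpleGraph V} [DecidableRel G.Adj] {l w x : V}
    (hl : G.degree l = 1) (hw : G.Adj l w) (hx : G.Adj l x) : x = w := by
  rw [← SimpleGraph.card_neighborFinset_eq_degree, Finset.card_eq_one] at hl
  obtain ⟨a, ha⟩ := hl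
  have h1 : w ∈ G.neighborFinset l := by simpa using hw
  have h2 : x ∈ G.neighborFinset l := by simpa using hx
  rw [ha, mem_singleton] at h1 h2; rw [h1, h2]

lemma two_le_of_compl_subset {A s : Finset V} (h5 : A.card + 2 ≤ Fintype.card V)
    (hsub : ∀ x, x ∉ A → x ∈ s) : 2 ≤ s.card := by
  have h1 : Aᶜ ⊆ s := by intro x hx; exact hsub x (by simpa using hx)
  have := Finset.card_le_card h1
  rw [Finset.card_compl] at this
  omega

lemma neighborFinset_congr {G G' : SimpleGraph V} [DecidableRel G.Adj] [DecidableRel G'.Adj]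
    (h : G = G') (v : V) : G.neighborFinset v = G'.neighborFinset v := by
  ext x; simp only [SimpleGraph.mem_neighborFinset]; rw [h]

lemma gammaCer_congr {G G' : SimpleGraph V} [DecidableRel G.Adj] [DecidableRel G'.Adj]
    (h : G = G') : gammaCer G = gammaCer G' := by
  unfold gammaCer
  congr 1
  ext n
  constructor <;> rintro ⟨D, ⟨hd, hc⟩, rfl⟩
  · exact ⟨D, ⟨h ▸ hd, fun v hv => by rw [← neighborFinset_congr h v]; exact hc v hv⟩, rfl⟩
  · exact ⟨D, ⟨h ▸ hd, fun v hv => by rw [neighborFinset_congr h v]; exact hc v hv⟩, rfl⟩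

lemma degree_congr {G G' : SimpleGraph V} [DecidableRel G.Adj] [DecidableRel G'.Adj]
    (h : G = G') (v : V) : G.degree v = G'.degree v := by
  rw [← SimpleGraph.card_neighborFinset_eq_degree, ← SimpleGraph.card_neighborFinset_eq_degree,
    neighborFinset_congr h]

lemma corona_congr {G G' : SimpleGraph V} [DecidableRel G.Adj] [DecidableRel G'.Adj]
    (h : G = G') :
    (∀ v, IsLeaf G v ∨ IsWeakSupport G v) ↔ (∀ v, IsLeaf G' v ∨ IsWeakSupport G' v) := by
  have hl : ∀ v, leafNbrs G v = leafNbrs G' v := by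
    intro v
    unfold leafNbrs
    rw [neighborFinset_congr h]
    apply Finset.filter_congr
    intro x _
    simp [degree_congr h x]
  unfold IsLeaf IsWeakSupport
  constructor <;> intro hc v <;> rcases hc v with h1 | h1
  · exact Or.inl (by rw [← degree_congr h]; exact h1)
  · exact Or.inr (by rw [← hl]; exact h1)
  · exact Or.inl (by rw [degree_congr h]; exact h1)
  · exact Or.inr (by rw [hl]; exact h1)

lemma gamma_le_card (G : SimpleGraph V) : gamma G ≤ Fintype.card V := by
  simpa using gamma_le G (isDomSet_univ G)

lemma greedy_aux (G : SimpleGraph V) [DecidableRel G.Adj] (k : ℕ) (hk2 : 2 ≤ k) (hkn : k - 1 ≤ Fintype.card V)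
    (hfail : ∀ S : Finset V, S.card = k - 1 → ∃ y, y ∉ S ∧ ∀ s ∈ S, G.Adj y s) :
    ∀ (m : ℕ) (U : Finset V), U.card ≤ m →
      ∃ D : Finset V, (∀ u ∈ U, u ∈ D ∨ ∃ d ∈ D, G.Adj d u) ∧
        D.card * (k - 1) ≤ U.card + (k - 2) := by
  intro m
  induction m with
  | zero =>
    intro U hU
    refine ⟨∅, fun u hu => ?_, ?_⟩
    · have : U = ∅ := Finset.card_eq_zero.mp (Nat.le_zero.mp hU)
      simp [this] at hu
    · simp
  | succ m ih =>
    intro U hU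
    rcases Finset.eq_empty_or_nonempty U with rfl | hne
    · refine ⟨∅, by simp, by simp⟩
    by_cases hsmall : U.card ≤ k - 1
    · -- pad U to size k-1
      obtain ⟨S, hUS, hScard⟩ := Finset.exists_superset_card_eq hsmall hkn
      obtain ⟨y, _, hy⟩ := hfail S hScard
      refine ⟨{y}, fun u hu => Or.inr ⟨y, mem_singleton_self y, hy u (hUS hu)⟩, ?_⟩
      have : 1 ≤ U.card := Finset.card_pos.mpr hne
      simp; omega
    · push_neg at hsmall
      obtain ⟨S, hSU, hScard⟩ := Finset.exists_subset_card_eq (le_of_lt hsmall)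
      obtain ⟨y, _, hy⟩ := hfail S hScard
      set U' := U \ insert y (G.neighborFinset y) with hU'
      have hsub : U' ⊆ U \ S := by
        apply Finset.sdiff_subset_sdiff (le_refl U)
        intro s hs
        exact Finset.mem_insert_of_mem (by simpa using hy s hs)
      have hcard' : U'.card ≤ U.card - (k - 1) := by
        have := Finset.card_le_card hsub
        rwa [Finset.card_sdiff_of_subset hSU, hScard] at this
      have hm : U'.card ≤ m := by omega
      obtain ⟨D', hD'cov, hD'card⟩ := ih U' hm
      refine ⟨insert y D', ?_, ?_⟩
      · intro u hu
        by_cases h1 : u ∈ U'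
        · rcases hD'cov u h1 with h2 | ⟨d, hd, hadj⟩
          · exact Or.inl (mem_insert_of_mem h2)
          · exact Or.inr ⟨d, mem_insert_of_mem hd, hadj⟩
        · have : u ∈ insert y (G.neighborFinset y) := by
            rw [hU'] at h1; simp only [Finset.mem_sdiff] at h1; tauto
          rcases Finset.mem_insert.mp this with rfl | h2
          · exact Or.inl (mem_insert_self u D')
          · exact Or.inr ⟨y, mem_insert_self y D', (SimpleGraph.mem_neighborFinset _ _ _).mp h2⟩
      · have h3 : (insert y D').card ≤ D'.card + 1 := Finset.card_insert_le y D'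
        have h4 : (insert y D').card * (k-1) ≤ D'.card * (k-1) + (k-1) := by
          calc (insert y D').card * (k-1) ≤ (D'.card + 1) * (k-1) := Nat.mul_le_mul_right _ h3
          _ = D'.card * (k-1) + (k-1) := by ring
        omega

lemma key_ineq (G : SimpleGraph V) [DecidableRel G.Adj] [DecidableRel Gᶜ.Adj]
    (hb : 2 ≤ gamma Gᶜ) :
    (gamma G - 1) * (gamma Gᶜ - 1) ≤ Fintype.card V - 1 := by
  set k := gamma Gᶜ with hk
  have hkn : k - 1 ≤ Fintype.card V := by
    have := gamma_le_card Gᶜ; omega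
  have hfail : ∀ S : Finset V, S.card = k - 1 → ∃ y, y ∉ S ∧ ∀ s ∈ S, G.Adj y s := by
    intro S hS
    have hnd : ¬ IsDomSet Gᶜ S := by
      intro hdom
      have := gamma_le Gᶜ hdom
      omega
    unfold IsDomSet at hnd
    push_neg at hnd
    obtain ⟨y, hyS, hy⟩ := hnd
    refine ⟨y, hyS, fun s hs => ?_⟩
    have h1 := hy s hs
    rw [SimpleGraph.compl_adj] at h1
    push_neg at h1
    have hne : s ≠ y := fun h => hyS (h ▸ hs)
    exact (h1 hne).symm
  obtain ⟨D, hcov, hcard⟩ := greedy_aux G k (by omega) hkn hfail (Fintype.card V) univ (by simp)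
  have hdom : IsDomSet G D := by
    intro v hv
    rcases hcov v (mem_univ v) with h | ⟨d, hd, hadj⟩
    · exact absurd h hv
    · exact ⟨d, hd, hadj⟩
  have hle : gamma G ≤ D.card := gamma_le G hdom
  rw [Finset.card_univ] at hcard
  have h2 : (gamma G - 1) * (k - 1) ≤ (D.card - 1) * (k-1) := Nat.mul_le_mul_right _ (by omega)
  have h3 : (D.card - 1) * (k-1) = D.card * (k-1) - (k-1) := by
    rw [Nat.sub_mul, one_mul]
  omega

lemma key_bounds (G : SimpleGraph V) [DecidableRel G.Adj] [DecidableRel Gᶜ.Adj]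
    (ha : 3 ≤ gamma G) (hb : 3 ≤ gamma Gᶜ) :
    gamma G + gamma Gᶜ ≤ Fintype.card V + 1 ∧
    gamma G * gamma Gᶜ ≤ 2 * Fintype.card V - 1 := by
  have hkey := key_ineq G (by omega)
  set a := gamma G
  set k := gamma Gᶜ
  have hn : 1 ≤ Fintype.card V := by
    have := gamma_le_card G; omega
  have hsum : a + k ≤ Fintype.card V + 1 := by
    have h1 : (a-1) + (k-1) ≤ (a-1) * (k-1) := by
      have h2 : 2 ≤ a - 1 := by omega
      have h3 : 2 ≤ k - 1 := by omega
      nlinarith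
    omega
  refine ⟨hsum, ?_⟩
  obtain ⟨a', ha'⟩ : ∃ a', a = a' + 2 := ⟨a - 2, by omega⟩
  obtain ⟨k', hk'⟩ : ∃ k', k = k' + 2 := ⟨k - 2, by omega⟩
  rw [ha', hk'] at hkey hsum ⊢
  have e1 : a' + 2 - 1 = a' + 1 := by omega
  have e2 : k' + 2 - 1 = k' + 1 := by omega
  rw [e1, e2] at hkey
  obtain ⟨c', hc'⟩ : ∃ c', Fintype.card V = c' + 1 := ⟨Fintype.card V - 1, by omega⟩
  rw [hc'] at hkey hsum ⊢
  have e3 : c' + 1 - 1 = c' := by omega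
  rw [e3] at hkey
  have e4 : 2 * (c' + 1) - 1 = 2 * c' + 1 := by omega
  rw [e4]
  nlinarith [hkey, hsum]

lemma gammaCer_le_gamma (G : SimpleGraph V) [DecidableRel G.Adj]
    (hδ : ∀ v, 2 ≤ G.degree v) : gammaCer G ≤ gamma G := by
  classical
  -- the finset of all minimum dominating sets
  set F : Finset (Finset V) := univ.filter (fun D => IsDomSet G D ∧ D.card = gamma G) with hF
  have hFne : F.Nonempty := by
    obtain ⟨D, h1, h2⟩ := gamma_exists G
    exact ⟨D, by simp [hF, h1, h2]⟩
  obtain ⟨D, hDF, hmax⟩ := F.exists_max_image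
    (fun D => ∑ v ∈ D, min 2 ((G.neighborFinset v \ D).card)) hFne
  rw [hF, Finset.mem_filter] at hDF
  obtain ⟨-, hdom, hcard⟩ := hDF
  -- claim : D is certified
  by_cases hcert : ∀ v ∈ D, (G.neighborFinset v \ D).card = 0 ∨ 2 ≤ (G.neighborFinset v \ D).card
  · calc gammaCer G ≤ D.card := gammaCer_le G ⟨hdom, hcert⟩
    _ = gamma G := hcard
  exfalso
  push_neg at hcert
  obtain ⟨v, hvD, hv0, hv2⟩ := hcert
  have hv1 : (G.neighborFinset v \ D).card = 1 := by omega
  rw [Finset.card_eq_one] at hv1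
  obtain ⟨u, hu⟩ := hv1
  have huv : G.Adj v u ∧ u ∉ D := by
    have : u ∈ G.neighborFinset v \ D := by rw [hu]; exact mem_singleton_self u
    simp only [Finset.mem_sdiff, SimpleGraph.mem_neighborFinset] at this
    exact this
  -- step (i) : N(u) ∩ D = {v}
  have hstep1 : ∀ w ∈ D, G.Adj w u → w = v := by
    intro w hwD hwu
    by_contra hne
    -- then D.erase v is dominating, contradiction with minimality
    have hvnbr : ∃ y ∈ D.erase v, G.Adj y v := by
      by_contra hnone
      push_neg at hnone
      -- then N(v) = {u}, contradicting degree ≥ 2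
      have hsub : G.neighborFinset v ⊆ {u} := by
        intro y hy
        rw [SimpleGraph.mem_neighborFinset] at hy
        by_cases hyD : y ∈ D
        · exfalso
          have hyv : y ≠ v := fun h => G.loopless.irrefl v (h ▸ hy)
          exact absurd hy.symm (hnone y (Finset.mem_erase.mpr ⟨hyv, hyD⟩))
        · have : y ∈ G.neighborFinset v \ D := by
            simp [SimpleGraph.mem_neighborFinset, hy, hyD]
          rw [hu] at this; exact this
      have := Finset.card_le_card hsub
      rw [Finset.card_singleton] at this
      have hd := hδ v
      rw [← SimpleGraph.card_neighborFinset_eq_degree] at hd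
      omega
    have hdom' : IsDomSet G (D.erase v) := by
      intro x hx
      by_cases hxv : x = v
      · obtain ⟨y, hy1, hy2⟩ := hvnbr
        exact ⟨y, hy1, hxv ▸ hy2⟩
      · have hxD : x ∉ D := fun h => hx (Finset.mem_erase.mpr ⟨hxv, h⟩)
        obtain ⟨d, hdD, hdx⟩ := hdom x hxD
        by_cases hdv : d = v
        · -- x is an external neighbour of v, so x = u
          have hxu : x = u := by
            have : x ∈ G.neighborFinset v \ D := by
              simp [SimpleGraph.mem_neighborFinset, ← hdv, hdx, hxD]
            rw [hu, Finset.mem_singleton] at this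
            exact this
          exact ⟨w, Finset.mem_erase.mpr ⟨hne, hwD⟩, hxu ▸ hwu⟩
        · exact ⟨d, Finset.mem_erase.mpr ⟨hdv, hdD⟩, hdx⟩
    have := gamma_le G hdom'
    rw [Finset.card_erase_of_mem hvD, hcard] at this
    have hpos : 1 ≤ gamma G := by
      by_contra h0
      have : D = ∅ := Finset.card_eq_zero.mp (by omega)
      rw [this] at hvD; simp at hvD
    omega
  -- step (ii) : u has a neighbour z outside D, z ≠ v
  have hdegu := hδ u
  rw [← SimpleGraph.card_neighborFinset_eq_degree] at hdegu
  obtain ⟨z, hzmem, hzv⟩ : ∃ z ∈ G.neighborFinset u, z ≠ v :=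
    Finset.exists_mem_ne (by omega) v
  rw [SimpleGraph.mem_neighborFinset] at hzmem
  have hzD : z ∉ D := fun h => hzv (hstep1 z h hzmem.symm)
  have hzu : z ≠ u := fun h => G.loopless.irrefl u (h ▸ hzmem)
  -- step (iii) : the swap D' = insert u (D.erase v)
  set D' : Finset V := insert u (D.erase v) with hD'
  have huE : u ∉ D.erase v := fun h => huv.2 (Finset.mem_erase.mp h).2
  have hvD' : v ∉ D' := by
    rw [hD', Finset.mem_insert]
    rintro (rfl | h)
    · exact huv.2 hvD
    · exact (Finset.mem_erase.mp h).1 rfl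
  have hcard' : D'.card = gamma G := by
    rw [hD', Finset.card_insert_of_notMem huE, Finset.card_erase_of_mem hvD]
    have : 1 ≤ D.card := Finset.card_pos.mpr ⟨v, hvD⟩
    omega
  have hdom' : IsDomSet G D' := by
    intro x hx
    by_cases hxv : x = v
    · exact ⟨u, Finset.mem_insert_self u _, hxv ▸ huv.1.symm⟩
    · have hxD : x ∉ D := by
        intro h
        exact hx (Finset.mem_insert_of_mem (Finset.mem_erase.mpr ⟨hxv, h⟩))
      obtain ⟨d, hdD, hdx⟩ := hdom x hxD
      by_cases hdv : d = v
      · exfalso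
        have : x ∈ G.neighborFinset v \ D := by
          simp [SimpleGraph.mem_neighborFinset, ← hdv, hdx, hxD]
        rw [hu, Finset.mem_singleton] at this
        exact hx (this ▸ Finset.mem_insert_self u _)
      · exact ⟨d, Finset.mem_insert_of_mem (Finset.mem_erase.mpr ⟨hdv, hdD⟩), hdx⟩
  have hD'F : D' ∈ F := by
    rw [hF, Finset.mem_filter]
    exact ⟨mem_univ _, hdom', hcard'⟩
  -- step (iv) : the potential strictly increases, contradiction
  have hle := hmax D' hD'F
  set g : V → ℕ := fun w => min 2 ((G.neighborFinset w \ D).card) with hg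
  set g' : V → ℕ := fun w => min 2 ((G.neighborFinset w \ D').card) with hg'
  have hgv : g v = 1 := by
    rw [hg]; simp only; rw [hu]; simp
  have hg'u : g' u = 2 := by
    have hsub : ({v, z} : Finset V) ⊆ G.neighborFinset u \ D' := by
      intro y hy
      rcases Finset.mem_insert.mp hy with rfl | hy
      · simp only [Finset.mem_sdiff, SimpleGraph.mem_neighborFinset]
        exact ⟨huv.1.symm, hvD'⟩
      · rw [Finset.mem_singleton] at hy
        subst hy
        simp only [Finset.mem_sdiff, SimpleGraph.mem_neighborFinset]
        refine ⟨hzmem, ?_⟩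
        rw [hD', Finset.mem_insert]
        rintro (rfl | h)
        · exact hzu rfl
        · exact hzD (Finset.mem_erase.mp h).2
    have h2 : 2 ≤ (G.neighborFinset u \ D').card := by
      have := Finset.card_le_card hsub
      rwa [Finset.card_pair hzv.symm] at this
    rw [hg']
    simp only
    omega
  have hmono : ∀ w ∈ D.erase v, g w ≤ g' w := by
    intro w hw
    have hwv : w ≠ v := (Finset.mem_erase.mp hw).1
    have hwD : w ∈ D := (Finset.mem_erase.mp hw).2
    have hsub : G.neighborFinset w \ D ⊆ G.neighborFinset w \ D' := by
      intro x hx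
      rw [Finset.mem_sdiff] at hx ⊢
      refine ⟨hx.1, ?_⟩
      rw [hD', Finset.mem_insert]
      rintro (rfl | h)
      · rw [SimpleGraph.mem_neighborFinset] at hx
        exact hwv (hstep1 w hwD hx.1)
      · exact hx.2 (Finset.mem_erase.mp h).2
    have := Finset.card_le_card hsub
    rw [hg, hg']
    simp only
    omega
  -- assemble the sums
  have hsum1 : ∑ w ∈ D, g w = 1 + ∑ w ∈ D.erase v, g w := by
    rw [← Finset.add_sum_erase D g hvD, hgv]
  have hsum2 : ∑ w ∈ D', g' w = 2 + ∑ w ∈ D.erase v, g' w := by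
    rw [hD', Finset.sum_insert huE, hg'u]
  have hsum3 : ∑ w ∈ D.erase v, g w ≤ ∑ w ∈ D.erase v, g' w :=
    Finset.sum_le_sum hmono
  have hle' : ∑ w ∈ D', g' w ≤ ∑ w ∈ D, g w := hle
  omega

lemma support_structure (G : SimpleGraph V) [DecidableRel G.Adj] [DecidableRel Gᶜ.Adj]
    (h5 : 5 ≤ Fintype.card V) (hb : 3 ≤ gammaCer Gᶜ) {l w : V}
    (hl : G.degree l = 1) (hlw : G.Adj l w) :
    ∃ a, a ≠ w ∧ a ≠ l ∧ ¬ G.Adj w a ∧ ∀ x, x ≠ w → x ≠ a → G.Adj w x := by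
  have hlnw : l ≠ w := G.ne_of_adj hlw
  -- Step 1: the complement degree of w must be 1
  have hdw : (Gᶜ.neighborFinset w).card = 1 := by
    by_contra hne
    have hcert : IsCertDomSet Gᶜ {l, w} := by
      constructor
      · intro x hx
        simp only [Finset.mem_insert, Finset.mem_singleton] at hx
        push_neg at hx
        refine ⟨l, by simp, ?_⟩
        rw [SimpleGraph.compl_adj]
        exact ⟨Ne.symm hx.1, fun h => hx.2 (leaf_eq hl hlw h)⟩
      · intro v hv
        simp only [Finset.mem_insert, Finset.mem_singleton] at hv
        rcases hv with rfl | rfl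
        · right
          refine two_le_of_compl_subset (A := {v, w}) ?_ ?_
          · have : ({v, w} : Finset V).card ≤ 2 := Finset.card_insert_le _ _
            omega
          · intro x hx
            simp only [Finset.mem_insert, Finset.mem_singleton] at hx
            push_neg at hx
            simp only [Finset.mem_sdiff, SimpleGraph.mem_neighborFinset, Finset.mem_insert,
              Finset.mem_singleton, SimpleGraph.compl_adj]
            exact ⟨⟨Ne.symm hx.1, fun h => hx.2 (leaf_eq hl hlw h)⟩, by tauto⟩
        · have heq : Gᶜ.neighborFinset v \ {l, v} = Gᶜ.neighborFinset v := by
            apply Finset.sdiff_eq_self_of_disjoint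
            rw [Finset.disjoint_insert_right, Finset.disjoint_singleton_right]
            constructor
            · rw [SimpleGraph.mem_neighborFinset, SimpleGraph.compl_adj]
              push_neg
              intro _; exact hlw.symm
            · simp [SimpleGraph.mem_neighborFinset]
          rw [heq]
          omega
    have := gammaCer_le Gᶜ hcert
    have hcard : ({l, w} : Finset V).card ≤ 2 := Finset.card_insert_le _ _
    omega
  rw [Finset.card_eq_one] at hdw
  obtain ⟨a, ha⟩ := hdw
  have haw : Gᶜ.Adj w a := by
    rw [← SimpleGraph.mem_neighborFinset, ha]; simp
  rw [SimpleGraph.compl_adj] at haw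
  refine ⟨a, Ne.symm haw.1, ?_, haw.2, ?_⟩
  · rintro rfl; exact haw.2 hlw.symm
  · intro x hxw hxa
    by_contra hnadj
    have : x ∈ Gᶜ.neighborFinset w := by
      rw [SimpleGraph.mem_neighborFinset, SimpleGraph.compl_adj]
      exact ⟨Ne.symm hxw, hnadj⟩
    rw [ha, Finset.mem_singleton] at this
    exact hxa this

lemma mindeg_two (G : SimpleGraph V) [DecidableRel G.Adj] [DecidableRel Gᶜ.Adj]
    (h5 : 5 ≤ Fintype.card V) (ha : 3 ≤ gammaCer G) (hb : 3 ≤ gammaCer Gᶜ) :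
    ∀ v, 2 ≤ G.degree v := by
  intro v
  by_contra hdeg
  push_neg at hdeg
  interval_cases h : G.degree v
  · -- isolated vertex : {v} is a certified dominating set of Gᶜ
    have hiso : ∀ x, ¬ G.Adj v x := by
      intro x hx
      have : x ∈ G.neighborFinset v := by simpa using hx
      rw [← SimpleGraph.card_neighborFinset_eq_degree] at h
      rw [Finset.card_eq_zero.mp h] at this
      simp at this
    have hcert : IsCertDomSet Gᶜ {v} := by
      constructor
      · intro x hx
        rw [Finset.mem_singleton] at hx
        exact ⟨v, by simp, by rw [SimpleGraph.compl_adj]; exact ⟨Ne.symm hx, hiso x⟩⟩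
      · intro u hu
        rw [Finset.mem_singleton] at hu
        subst hu
        right
        refine two_le_of_compl_subset (A := {u}) (by simp; omega) ?_
        intro x hx
        rw [Finset.mem_singleton] at hx
        simp only [Finset.mem_sdiff, SimpleGraph.mem_neighborFinset, SimpleGraph.compl_adj,
          Finset.mem_singleton]
        exact ⟨⟨Ne.symm hx, hiso x⟩, hx⟩
    have := gammaCer_le Gᶜ hcert
    simp at this
    omega
  · -- leaf v =: l with support w
    obtain ⟨w, hw⟩ : ∃ w, G.Adj v w := by
      rw [← SimpleGraph.card_neighborFinset_eq_degree, Finset.card_eq_one] at h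
      obtain ⟨w, hww⟩ := h
      exact ⟨w, by rw [← SimpleGraph.mem_neighborFinset, hww]; simp⟩
    rw [← SimpleGraph.card_neighborFinset_eq_degree] at h
    have hl : G.degree v = 1 := by rw [← SimpleGraph.card_neighborFinset_eq_degree]; exact h
    obtain ⟨a, haw, hal, hnwa, hwall⟩ := support_structure G h5 hb hl hw
    by_cases hda : G.degree a = 1
    · -- a is a leaf with support b
      obtain ⟨b, hab⟩ : ∃ b, G.Adj a b := by
        rw [← SimpleGraph.card_neighborFinset_eq_degree, Finset.card_eq_one] at hda
        obtain ⟨b, hbb⟩ := hda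
        exact ⟨b, by rw [← SimpleGraph.mem_neighborFinset, hbb]; simp⟩
      have hbw : b ≠ w := by rintro rfl; exact hnwa hab.symm
      have hbl : b ≠ v := by
        rintro rfl
        exact haw (leaf_eq hl hw hab.symm)
      obtain ⟨a', ha'b, ha'a, hnba', hball⟩ := support_structure G h5 hb hda hab
      have ha'l : a' = v := by
        by_contra hne
        have : G.Adj b v := hball v (Ne.symm hbl) (fun h => hne h.symm)
        exact hbw (leaf_eq hl hw this.symm)
      rw [ha'l] at hball
      -- D = {w, b} is a certified dominating set of G
      have hcert : IsCertDomSet G {w, b} := by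
        constructor
        · intro x hx
          simp only [Finset.mem_insert, Finset.mem_singleton] at hx
          push_neg at hx
          by_cases hxa : x = a
          · exact ⟨b, by simp, hxa ▸ hab.symm⟩
          · exact ⟨w, by simp, hwall x hx.1 hxa⟩
        · intro u hu
          simp only [Finset.mem_insert, Finset.mem_singleton] at hu
          rcases hu with rfl | rfl
          · right
            refine two_le_of_compl_subset (A := {u, a, b}) ?_ ?_
            · have : ({u, a, b} : Finset V).card ≤ 3 := by
                apply le_trans (Finset.card_insert_le _ _)
                have : ({a, b} : Finset V).card ≤ 2 := Finset.card_insert_le _ _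
                omega
              omega
            · intro x hx
              simp only [Finset.mem_insert, Finset.mem_singleton] at hx
              push_neg at hx
              simp only [Finset.mem_sdiff, SimpleGraph.mem_neighborFinset, Finset.mem_insert,
                Finset.mem_singleton]
              exact ⟨hwall x hx.1 hx.2.1, by tauto⟩
          · right
            refine two_le_of_compl_subset (A := {u, v, w}) ?_ ?_
            · have : ({u, v, w} : Finset V).card ≤ 3 := by
                apply le_trans (Finset.card_insert_le _ _)
                have : ({v, w} : Finset V).card ≤ 2 := Finset.card_insert_le _ _
                omega
              omega
            · intro x hx
              simp only [Finset.mem_insert, Finset.mem_singleton] at hx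
              push_neg at hx
              simp only [Finset.mem_sdiff, SimpleGraph.mem_neighborFinset, Finset.mem_insert,
                Finset.mem_singleton]
              exact ⟨hball x hx.1 hx.2.1, by tauto⟩
      have := gammaCer_le G hcert
      have hcard : ({w, b} : Finset V).card ≤ 2 := Finset.card_insert_le _ _
      omega
    · -- D = {w, a} is a certified dominating set of G
      have hcert : IsCertDomSet G {w, a} := by
        constructor
        · intro x hx
          simp only [Finset.mem_insert, Finset.mem_singleton] at hx
          push_neg at hx
          exact ⟨w, by simp, hwall x hx.1 hx.2⟩
        · intro u hu
          simp only [Finset.mem_insert, Finset.mem_singleton] at hu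
          rcases hu with rfl | rfl
          · right
            refine two_le_of_compl_subset (A := {u, a}) ?_ ?_
            · have : ({u, a} : Finset V).card ≤ 2 := Finset.card_insert_le _ _
              omega
            · intro x hx
              simp only [Finset.mem_insert, Finset.mem_singleton] at hx
              push_neg at hx
              simp only [Finset.mem_sdiff, SimpleGraph.mem_neighborFinset, Finset.mem_insert,
                Finset.mem_singleton]
              exact ⟨hwall x hx.1 hx.2, by tauto⟩
          · have heq : G.neighborFinset u \ {w, u} = G.neighborFinset u := by
              apply Finset.sdiff_eq_self_of_disjoint
              rw [Finset.disjoint_insert_right, Finset.disjoint_singleton_right]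
              constructor
              · rw [SimpleGraph.mem_neighborFinset]
                intro hadj; exact hnwa hadj.symm
              · simp [SimpleGraph.mem_neighborFinset]
            rw [heq]
            rw [SimpleGraph.card_neighborFinset_eq_degree]
            omega
      have := gammaCer_le G hcert
      have hcard : ({w, a} : Finset V).card ≤ 2 := Finset.card_insert_le _ _
      omega

lemma corona_gammaCer (G : SimpleGraph V) [DecidableRel G.Adj]
    (hc : ∀ v, IsLeaf G v ∨ IsWeakSupport G v) : gammaCer G = Fintype.card V := by
  refine le_antisymm (gammaCer_le_card G) ?_
  obtain ⟨D, ⟨hdom, hcert⟩, hcard⟩ := gammaCer_exists G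
  rw [← hcard, ← Finset.card_univ]
  apply Finset.card_le_card
  -- show univ ⊆ D, i.e. every vertex is in D
  -- first : every leaf is in D
  have hleaf : ∀ l, G.degree l = 1 → l ∈ D := by
    intro l hl
    by_contra hlD
    -- the support w of l is in D
    obtain ⟨w, hwD, hwl⟩ := hdom l hlD
    -- l is an external neighbour of w, so w has a second external neighbour y
    have hlmem : l ∈ G.neighborFinset w \ D := by
      simp [SimpleGraph.mem_neighborFinset, hwl, hlD]
    have h2 : 2 ≤ (G.neighborFinset w \ D).card := by
      rcases hcert w hwD with h0 | h2
      · rw [Finset.card_eq_zero.mp h0] at hlmem; simp at hlmem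
      · exact h2
    obtain ⟨y, hymem, hyl⟩ : ∃ y ∈ G.neighborFinset w \ D, y ≠ l :=
      Finset.exists_mem_ne (by omega) l
    rw [Finset.mem_sdiff, SimpleGraph.mem_neighborFinset] at hymem
    obtain ⟨hwy, hyD⟩ := hymem
    -- y cannot be a leaf (else w would have two leaf neighbours)
    rcases hc y with hyleaf | hysupp
    · -- y leaf : then both l and y are leaf-neighbours of w
      have hsub : ({l, y} : Finset V) ⊆ leafNbrs G w := by
        intro t ht
        rcases Finset.mem_insert.mp ht with rfl | ht
        · simp only [leafNbrs, Finset.mem_filter, SimpleGraph.mem_neighborFinset]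
          exact ⟨hwl, hl⟩
        · rw [Finset.mem_singleton] at ht
          subst ht
          simp only [leafNbrs, Finset.mem_filter, SimpleGraph.mem_neighborFinset]
          exact ⟨hwy, hyleaf⟩
      have h2' : 2 ≤ (leafNbrs G w).card := by
        have := Finset.card_le_card hsub
        rwa [Finset.card_pair (Ne.symm hyl)] at this
      rcases hc w with hwleaf | hwsupp
      · -- w leaf : degree 1 but leafNbrs ⊆ nbrs has card ≥ 2
        have := Finset.card_le_card (Finset.filter_subset (fun l => G.degree l = 1)
          (G.neighborFinset w))
        unfold IsLeaf at hwleaf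
        rw [← SimpleGraph.card_neighborFinset_eq_degree] at hwleaf
        unfold leafNbrs at h2'
        omega
      · unfold IsWeakSupport at hwsupp
        omega
    · -- y is a weak support with leaf ly
      obtain ⟨ly, hlymem⟩ : ∃ ly, ly ∈ leafNbrs G y := by
        unfold IsWeakSupport at hysupp
        rw [Finset.card_eq_one] at hysupp
        obtain ⟨ly, h⟩ := hysupp
        exact ⟨ly, by rw [h]; simp⟩
      simp only [leafNbrs, Finset.mem_filter, SimpleGraph.mem_neighborFinset] at hlymem
      obtain ⟨hyly, hlyleaf⟩ := hlymem
      -- ly must be in D (its only neighbour y is outside D)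
      have hlyD : ly ∈ D := by
        by_contra hlyD
        obtain ⟨d, hdD, hdly⟩ := hdom ly hlyD
        have : d = y := leaf_eq hlyleaf hyly.symm hdly.symm
        exact hyD (this ▸ hdD)
      -- but then ly has exactly one external neighbour y : contradiction
      have hext : G.neighborFinset ly \ D = {y} := by
        ext t
        simp only [Finset.mem_sdiff, SimpleGraph.mem_neighborFinset, Finset.mem_singleton]
        constructor
        · rintro ⟨h1, h2⟩
          exact leaf_eq hlyleaf hyly.symm h1
        · rintro rfl
          exact ⟨hyly.symm, hyD⟩
      rcases hcert ly hlyD with h0 | h2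
      · rw [hext] at h0; simp at h0
      · rw [hext] at h2; simp at h2
  -- now : every vertex is in D
  intro x _
  by_contra hxD
  rcases hc x with hxleaf | hxsupp
  · exact hxD (hleaf x hxleaf)
  · obtain ⟨lx, hlxmem⟩ : ∃ lx, lx ∈ leafNbrs G x := by
      unfold IsWeakSupport at hxsupp
      rw [Finset.card_eq_one] at hxsupp
      obtain ⟨lx, h⟩ := hxsupp
      exact ⟨lx, by rw [h]; simp⟩
    simp only [leafNbrs, Finset.mem_filter, SimpleGraph.mem_neighborFinset] at hlxmem
    obtain ⟨hxlx, hlxleaf⟩ := hlxmem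
    have hlxD : lx ∈ D := hleaf lx hlxleaf
    have hext : G.neighborFinset lx \ D = {x} := by
      ext t
      simp only [Finset.mem_sdiff, SimpleGraph.mem_neighborFinset, Finset.mem_singleton]
      constructor
      · rintro ⟨h1, h2⟩
        exact leaf_eq hlxleaf hxlx.symm h1
      · rintro rfl
        exact ⟨hxlx.symm, hxD⟩
    rcases hcert lx hlxD with h0 | h2
    · rw [hext] at h0; simp at h0
    · rw [hext] at h2; simp at h2

/-- Every vertex of a corona graph has a neighbour. -/

lemma corona_nbr (G : SimpleGraph V) [DecidableRel G.Adj]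
    (hc : ∀ v, IsLeaf G v ∨ IsWeakSupport G v) (v : V) : ∃ t, G.Adj v t := by
  rcases hc v with h | h
  · unfold IsLeaf at h
    rw [← SimpleGraph.card_neighborFinset_eq_degree, Finset.card_eq_one] at h
    obtain ⟨t, ht⟩ := h
    exact ⟨t, by rw [← SimpleGraph.mem_neighborFinset, ht]; simp⟩
  · unfold IsWeakSupport at h
    rw [Finset.card_eq_one] at h
    obtain ⟨t, ht⟩ := h
    have : t ∈ leafNbrs G v := by rw [ht]; simp
    simp only [leafNbrs, Finset.mem_filter, SimpleGraph.mem_neighborFinset] at this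
    exact ⟨t, this.1⟩

/-- From a vertex of a corona graph, extract a leaf/support pair. -/

lemma corona_pair (G : SimpleGraph V) [DecidableRel G.Adj]
    (hc : ∀ v, IsLeaf G v ∨ IsWeakSupport G v) (v : V) :
    ∃ l w, G.degree l = 1 ∧ G.Adj l w ∧ (l = v ∨ w = v) := by
  rcases hc v with h | h
  · obtain ⟨t, ht⟩ := corona_nbr G hc v
    exact ⟨v, t, h, ht, Or.inl rfl⟩
  · unfold IsWeakSupport at h
    rw [Finset.card_eq_one] at h
    obtain ⟨t, ht⟩ := h
    have : t ∈ leafNbrs G v := by rw [ht]; simp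
    simp only [leafNbrs, Finset.mem_filter, SimpleGraph.mem_neighborFinset] at this
    exact ⟨t, v, this.2, this.1.symm, Or.inr rfl⟩

/-- In a corona graph on at least 5 vertices, the complement has certified
domination number 2. -/

lemma corona_gammaCer_compl (G : SimpleGraph V) [DecidableRel G.Adj] [DecidableRel Gᶜ.Adj]
    (h5 : 5 ≤ Fintype.card V) (hc : ∀ v, IsLeaf G v ∨ IsWeakSupport G v) :
    gammaCer Gᶜ = 2 := by
  -- two leaves with distinct supports
  obtain ⟨v0⟩ : Nonempty V := Fintype.card_pos_iff.mp (by omega)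
  obtain ⟨l1, w1, hl1, hlw1, -⟩ := corona_pair G hc v0
  obtain ⟨v, hv1, hv2⟩ : ∃ v, v ≠ l1 ∧ v ≠ w1 := by
    have h2 : 2 ≤ ((univ : Finset V) \ {l1, w1}).card := by
      refine two_le_of_compl_subset (A := {l1, w1}) ?_ ?_
      · have : ({l1, w1} : Finset V).card ≤ 2 := Finset.card_insert_le _ _
        omega
      · intro x hx; simp only [Finset.mem_sdiff, mem_univ, true_and]; exact hx
    obtain ⟨v, hv⟩ := Finset.card_pos.mp
      (show (0:ℕ) < ((univ : Finset V) \ {l1, w1}).card by omega)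
    simp only [Finset.mem_sdiff, Finset.mem_insert, Finset.mem_singleton, mem_univ,
      true_and] at hv
    push_neg at hv
    exact ⟨v, hv.1, hv.2⟩
  obtain ⟨l2, w2, hl2, hlw2, hvor⟩ := corona_pair G hc v
  -- distinctness facts
  have hll : l1 ≠ l2 := by
    intro h
    have hw2w1 : w2 = w1 := leaf_eq hl1 hlw1 (h ▸ hlw2)
    rcases hvor with h' | h'
    · exact hv1 ((h' ▸ h.symm).symm).symm
    · exact hv2 (hw2w1 ▸ h').symm
  have hl2w1 : l2 ≠ w1 := by
    intro h
    -- then l2 = w1 is a leaf, and its unique neighbour forces w2 = l1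
    have hdw1 : G.degree w1 = 1 := h ▸ hl2
    have hw2l1 : w2 = l1 := leaf_eq hdw1 hlw1.symm (h ▸ hlw2)
    rcases hvor with h' | h'
    · exact hv2 (h ▸ h').symm
    · exact hv1 (hw2l1 ▸ h').symm
  have hl1w2 : l1 ≠ w2 := by
    intro h
    exact hl2w1 (leaf_eq hl1 hlw1 (show G.Adj l1 l2 from h ▸ hlw2.symm))
  have hww : w1 ≠ w2 := by
    rintro rfl
    -- w1 has two distinct leaf neighbours l1 l2 : impossible in a corona
    have hsub : ({l1, l2} : Finset V) ⊆ leafNbrs G w1 := by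
      intro t ht
      rcases Finset.mem_insert.mp ht with rfl | ht
      · simp only [leafNbrs, Finset.mem_filter, SimpleGraph.mem_neighborFinset]
        exact ⟨hlw1.symm, hl1⟩
      · rw [Finset.mem_singleton] at ht
        subst ht
        simp only [leafNbrs, Finset.mem_filter, SimpleGraph.mem_neighborFinset]
        exact ⟨hlw2.symm, hl2⟩
    have h2' : 2 ≤ (leafNbrs G w1).card := by
      have := Finset.card_le_card hsub
      rwa [Finset.card_pair hll] at this
    rcases hc w1 with hwleaf | hwsupp
    · have := Finset.card_le_card (Finset.filter_subset (fun l => G.degree l = 1)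
        (G.neighborFinset w1))
      unfold IsLeaf at hwleaf
      rw [← SimpleGraph.card_neighborFinset_eq_degree] at hwleaf
      unfold leafNbrs at h2'
      omega
    · unfold IsWeakSupport at hwsupp
      omega
  -- upper bound : {l1, l2} is a certified dominating set of the complement
  have hcert : IsCertDomSet Gᶜ {l1, l2} := by
    constructor
    · intro x hx
      simp only [Finset.mem_insert, Finset.mem_singleton] at hx
      push_neg at hx
      by_cases hxw : x = w1
      · refine ⟨l2, by simp, ?_⟩
        rw [SimpleGraph.compl_adj]
        subst hxw
        exact ⟨hl2w1, fun h => hww (leaf_eq hl2 hlw2 h)⟩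
      · refine ⟨l1, by simp, ?_⟩
        rw [SimpleGraph.compl_adj]
        exact ⟨Ne.symm hx.1, fun h => hxw (leaf_eq hl1 hlw1 h)⟩
    · intro u hu
      simp only [Finset.mem_insert, Finset.mem_singleton] at hu
      rcases hu with rfl | rfl
      · right
        refine two_le_of_compl_subset (A := {u, w1, l2}) ?_ ?_
        · have : ({u, w1, l2} : Finset V).card ≤ 3 := by
            apply le_trans (Finset.card_insert_le _ _)
            have : ({w1, l2} : Finset V).card ≤ 2 := Finset.card_insert_le _ _
            omega
          omega
        · intro x hx
          simp only [Finset.mem_insert, Finset.mem_singleton] at hx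
          push_neg at hx
          simp only [Finset.mem_sdiff, SimpleGraph.mem_neighborFinset, Finset.mem_insert,
            Finset.mem_singleton, SimpleGraph.compl_adj]
          refine ⟨⟨Ne.symm hx.1, fun h => hx.2.1 (leaf_eq hl1 hlw1 h)⟩, ?_⟩
          push_neg
          exact ⟨hx.1, hx.2.2⟩
      · right
        refine two_le_of_compl_subset (A := {u, w2, l1}) ?_ ?_
        · have : ({u, w2, l1} : Finset V).card ≤ 3 := by
            apply le_trans (Finset.card_insert_le _ _)
            have : ({w2, l1} : Finset V).card ≤ 2 := Finset.card_insert_le _ _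
            omega
          omega
        · intro x hx
          simp only [Finset.mem_insert, Finset.mem_singleton] at hx
          push_neg at hx
          simp only [Finset.mem_sdiff, SimpleGraph.mem_neighborFinset, Finset.mem_insert,
            Finset.mem_singleton, SimpleGraph.compl_adj]
          refine ⟨⟨Ne.symm hx.1, fun h => hx.2.1 (leaf_eq hl2 hlw2 h)⟩, ?_⟩
          push_neg
          exact ⟨hx.2.2, hx.1⟩
  have hle : gammaCer Gᶜ ≤ 2 := by
    have := gammaCer_le Gᶜ hcert
    have hcard : ({l1, l2} : Finset V).card ≤ 2 := Finset.card_insert_le _ _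
    omega
  -- lower bound : no certified dominating set of size ≤ 1
  have hge : 2 ≤ gammaCer Gᶜ := by
    obtain ⟨D, ⟨hdom, -⟩, hcard⟩ := gammaCer_exists Gᶜ
    rcases Finset.eq_empty_or_nonempty D with rfl | ⟨u, huD⟩
    · obtain ⟨x⟩ : Nonempty V := Fintype.card_pos_iff.mp (by omega)
      obtain ⟨d, hd, -⟩ := hdom x (by simp)
      simp at hd
    · by_contra hlt
      push_neg at hlt
      have hD : D = {u} := by
        have h1 : D.card ≤ 1 := by omega
        have h2 : 1 ≤ D.card := Finset.card_pos.mpr ⟨u, huD⟩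
        exact Finset.eq_singleton_iff_unique_mem.mpr ⟨huD, fun x hx => by
          by_contra hne
          have : 2 ≤ D.card := Finset.one_lt_card.mpr ⟨x, hx, u, huD, hne⟩
          omega⟩
      obtain ⟨t, hut⟩ := corona_nbr G hc u
      have htD : t ∉ D := by
        rw [hD, Finset.mem_singleton]
        rintro rfl
        exact G.loopless.irrefl t hut
      obtain ⟨d, hdD, hdt⟩ := hdom t htD
      rw [hD, Finset.mem_singleton] at hdD
      subst hdD
      rw [SimpleGraph.compl_adj] at hdt
      exact hdt.2 hut
  omega

lemma sdiff_univ_sdiff (N S : Finset V) : N \ (univ \ S) = N ∩ S := by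
  ext x; simp [Finset.mem_sdiff, Finset.mem_inter]

lemma degree_pos_nbr {G : SimpleGraph V} [DecidableRel G.Adj] {v : V}
    (h : 1 ≤ G.degree v) : ∃ w, G.Adj v w := by
  rw [← SimpleGraph.card_neighborFinset_eq_degree] at h
  obtain ⟨w, hw⟩ := Finset.card_pos.mp h
  exact ⟨w, (SimpleGraph.mem_neighborFinset _ _ _).mp hw⟩

/-- If `G` has no isolated vertices and is not a corona, then there is a certified
dominating set avoiding at least one vertex. -/

lemma noncorona_le (G : SimpleGraph V) [DecidableRel G.Adj]
    (hδ : ∀ v, 1 ≤ G.degree v)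
    (hnc : ¬ ∀ v, IsLeaf G v ∨ IsWeakSupport G v) :
    gammaCer G + 1 ≤ Fintype.card V := by
  classical
  -- it suffices to find a nonempty S with univ \ S certified dominating
  suffices h : ∃ S : Finset V, S.Nonempty ∧ IsCertDomSet G (univ \ S) by
    obtain ⟨S, hSne, hScert⟩ := h
    have h1 := gammaCer_le G hScert
    have h2 : (univ \ S).card = Fintype.card V - S.card := by
      rw [Finset.card_sdiff_of_subset (Finset.subset_univ S), Finset.card_univ]
    have h3 : 1 ≤ S.card := Finset.card_pos.mpr hSne
    have h4 : S.card ≤ Fintype.card V := Finset.card_le_univ S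
    omega
  push_neg at hnc
  obtain ⟨x, hx1, hx2⟩ := hnc
  by_cases hstrong : ∃ s, 2 ≤ (leafNbrs G s).card
  · -- Case 1 : a strong support exists; remove two of its leaves
    obtain ⟨s, hs⟩ := hstrong
    obtain ⟨l1, hl1, l2, hl2, hne⟩ := Finset.one_lt_card.mp (by omega : 1 < (leafNbrs G s).card)
    simp only [leafNbrs, Finset.mem_filter, SimpleGraph.mem_neighborFinset] at hl1 hl2
    refine ⟨{l1, l2}, ⟨l1, by simp⟩, ?_, ?_⟩
    · -- dominating
      intro v hv
      rw [Finset.mem_sdiff] at hv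
      push_neg at hv
      have hvS : v ∈ ({l1, l2} : Finset V) := hv (mem_univ v)
      have hsS : s ∉ ({l1, l2} : Finset V) := by
        simp only [Finset.mem_insert, Finset.mem_singleton]
        push_neg
        exact ⟨G.ne_of_adj hl1.1, G.ne_of_adj hl2.1⟩
      refine ⟨s, by simp [hsS], ?_⟩
      rcases Finset.mem_insert.mp hvS with rfl | hvS
      · exact hl1.1
      · rw [Finset.mem_singleton] at hvS; exact hvS ▸ hl2.1
    · -- certified
      intro v hv
      rw [sdiff_univ_sdiff]
      by_cases hvs : v = s
      · right
        subst hvs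
        have : ({l1, l2} : Finset V) ⊆ G.neighborFinset v ∩ {l1, l2} := by
          intro t ht
          rcases Finset.mem_insert.mp ht with rfl | ht
          · simp [SimpleGraph.mem_neighborFinset, hl1.1, ht]
          · rw [Finset.mem_singleton] at ht
            subst ht
            simp [SimpleGraph.mem_neighborFinset, hl2.1]
        have := Finset.card_le_card this
        rwa [Finset.card_pair hne] at this
      · left
        rw [Finset.card_eq_zero, Finset.eq_empty_iff_forall_notMem]
        intro t ht
        rw [Finset.mem_inter, SimpleGraph.mem_neighborFinset] at ht
        rcases Finset.mem_insert.mp ht.2 with rfl | h2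
        · exact hvs (leaf_eq hl1.2 hl1.1.symm ht.1.symm)
        · rw [Finset.mem_singleton] at h2
          subst h2
          exact hvs (leaf_eq hl2.2 hl2.1.symm ht.1.symm)
  · -- Case 2 : no strong supports
    push_neg at hstrong
    -- x has degree ≥ 2 and no leaf neighbours
    have hx3 : (leafNbrs G x).card = 0 := by
      have := hstrong x; omega
    have hdx : 2 ≤ G.degree x := by have := hδ x; omega
    -- the sets L, W, R, B
    set L : Finset V := univ.filter (fun v => G.degree v = 1) with hL
    set W : Finset V := univ.filter (fun v => 1 ≤ (leafNbrs G v).card) with hW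
    set R : Finset V := univ.filter (fun v => G.degree v ≠ 1 ∧ (leafNbrs G v).card = 0) with hR
    set B : Finset V := R.filter (fun r => ∀ w ∈ G.neighborFinset r, w ∉ W) with hB
    have hxR : x ∈ R := by
      rw [hR, Finset.mem_filter]
      exact ⟨mem_univ x, hx1, hx3⟩
    have hRdeg : ∀ r ∈ R, 2 ≤ G.degree r := by
      intro r hr
      rw [hR, Finset.mem_filter] at hr
      have := hδ r; omega
    have hRnoleaf : ∀ r ∈ R, ∀ y, G.Adj r y → y ∉ L := by
      intro r hr y hadj hyL
      rw [hR, Finset.mem_filter] at hr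
      rw [hL, Finset.mem_filter] at hyL
      have : y ∈ leafNbrs G r := by
        simp only [leafNbrs, Finset.mem_filter, SimpleGraph.mem_neighborFinset]
        exact ⟨hadj, hyL.2⟩
      rw [Finset.card_eq_zero.mp hr.2.2] at this
      simp at this
    have hBnbr : ∀ b ∈ B, ∀ y, G.Adj b y → y ∈ R := by
      intro b hb y hadj
      rw [hB, Finset.mem_filter] at hb
      have hyW : y ∉ W := hb.2 y ((SimpleGraph.mem_neighborFinset _ _ _).mpr hadj)
      have hyL : y ∉ L := hRnoleaf b hb.1 y hadj
      rw [hL, Finset.mem_filter] at hyL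
      rw [hW, Finset.mem_filter] at hyW
      simp only [mem_univ, true_and, not_lt] at hyW hyL
      rw [hR, Finset.mem_filter]
      refine ⟨mem_univ y, by tauto, by omega⟩
    -- maximal independent subset M of B
    obtain ⟨M, hMF, hMmax⟩ := Finset.exists_max_image
      ((B.powerset).filter (fun M => ∀ a ∈ M, ∀ b ∈ M, ¬ G.Adj a b)) (fun M => M.card)
      ⟨∅, by simp⟩
    rw [Finset.mem_filter, Finset.mem_powerset] at hMF
    obtain ⟨hMB, hMind⟩ := hMF
    have hMdom : ∀ b ∈ B, b ∉ M → ∃ m ∈ M, G.Adj m b := by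
      intro b hbB hbM
      by_contra hno
      push_neg at hno
      have hins : insert b M ∈ (B.powerset).filter (fun M => ∀ a ∈ M, ∀ b ∈ M, ¬ G.Adj a b) := by
        rw [Finset.mem_filter, Finset.mem_powerset]
        refine ⟨Finset.insert_subset hbB hMB, ?_⟩
        intro a ha c hc
        rw [Finset.mem_insert] at ha hc
        rcases ha with rfl | ha
        · rcases hc with rfl | hc
          · exact G.loopless.irrefl _
          · intro h; exact hno c hc h.symm
        · rcases hc with rfl | hc
          · exact hno a ha
          · exact hMind a ha c hc
      have := hMmax _ hins
      rw [Finset.card_insert_of_notMem hbM] at this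
      omega
    set T : Finset V := R \ M with hT
    set extra : Finset V := L.filter
      (fun l => ∃ w ∈ G.neighborFinset l, (G.neighborFinset w ∩ T).card = 1) with hextra
    set S : Finset V := T ∪ extra with hS
    have hTR : T ⊆ R := Finset.sdiff_subset
    have hextraL : extra ⊆ L := Finset.filter_subset _ _
    have hLR : ∀ v, v ∈ L → v ∉ R := by
      intro v hv hv'
      rw [hL, Finset.mem_filter] at hv
      rw [hR, Finset.mem_filter] at hv'
      exact hv'.2.1 hv.2
    have hWR : ∀ v, v ∈ W → v ∉ R := by
      intro v hv hv'
      rw [hW, Finset.mem_filter] at hv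
      rw [hR, Finset.mem_filter] at hv'
      omega
    -- membership in S
    have hSmem : ∀ v, v ∈ S ↔ (v ∈ T ∨ v ∈ extra) := by
      intro v; rw [hS]; simp [Finset.mem_union]
    -- supports are never in S
    have hWnotS : ∀ w', w' ∈ W → w' ∉ L → w' ∉ S := by
      intro w' hw1 hw2 hw3
      rcases (hSmem w').mp hw3 with h | h
      · exact hWR w' hw1 (hTR h)
      · exact hw2 (hextraL h)
    -- a leaf's support is never in T
    have hsupnotT : ∀ l' w', l' ∈ L → G.Adj l' w' → w' ∉ T := by
      intro l' w' hl' hadj hw'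
      rw [hL, Finset.mem_filter] at hl'
      exact hRnoleaf w' (hTR hw') l' hadj.symm (by rw [hL, Finset.mem_filter]; exact ⟨mem_univ _, hl'.2⟩)
    -- a leaf's support is never in extra
    have hsupnotextra : ∀ l' w', l' ∈ L → G.Adj l' w' → w' ∉ extra := by
      intro l' w' hl' hadj hw'
      rw [hextra, Finset.mem_filter] at hw'
      have hw'L := hw'.1
      obtain ⟨w2, hw2mem, hw2⟩ := hw'.2
      rw [SimpleGraph.mem_neighborFinset] at hw2mem
      -- w' is itself a leaf, so w2 = l'
      rw [hL, Finset.mem_filter] at hw'L hl'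
      have hw2l : w2 = l' := leaf_eq hw'L.2 hadj.symm hw2mem
      rw [hw2l] at hw2
      -- N(l') ∩ T ⊆ {w'} but w' ∈ L is not in T, so the card is 0
      have hempty : G.neighborFinset l' ∩ T = ∅ := by
        rw [Finset.eq_empty_iff_forall_notMem]
        intro t ht
        rw [Finset.mem_inter, SimpleGraph.mem_neighborFinset] at ht
        have htw : t = w' := leaf_eq hl'.2 hadj ht.1
        rw [htw] at ht
        exact hLR w' (by rw [hL, Finset.mem_filter]; exact hw'L) (hTR ht.2)
      rw [hempty] at hw2
      simp at hw2
    have hsupnotS : ∀ l' w', l' ∈ L → G.Adj l' w' → w' ∉ S := by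
      intro l' w' h1 h2 h3
      rcases (hSmem w').mp h3 with h | h
      · exact hsupnotT l' w' h1 h2 h
      · exact hsupnotextra l' w' h1 h2 h
    -- S is nonempty
    have hSne : S.Nonempty := by
      by_cases hxM : x ∈ M
      · obtain ⟨y, hy⟩ := degree_pos_nbr (show 1 ≤ G.degree x by omega)
        have hyR : y ∈ R := hBnbr x (hMB hxM) y hy
        have hyM : y ∉ M := by
          intro hyM
          exact hMind x hxM y hyM hy
        exact ⟨y, (hSmem y).mpr (Or.inl (by rw [hT, Finset.mem_sdiff]; exact ⟨hyR, hyM⟩))⟩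
      · exact ⟨x, (hSmem x).mpr (Or.inl (by rw [hT, Finset.mem_sdiff]; exact ⟨hxR, hxM⟩))⟩
    refine ⟨S, hSne, ?_, ?_⟩
    · -- dominating
      intro v hv
      rw [Finset.mem_sdiff] at hv
      push_neg at hv
      have hvS : v ∈ S := hv (mem_univ v)
      have hmemD : ∀ u, u ∉ S → u ∈ univ \ S := by
        intro u hu; rw [Finset.mem_sdiff]; exact ⟨mem_univ u, hu⟩
      rcases (hSmem v).mp hvS with hvT | hvextra
      · by_cases hvB : v ∈ B
        · have hvM : v ∉ M := (Finset.mem_sdiff.mp hvT).2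
          obtain ⟨m, hmM, hmv⟩ := hMdom v hvB hvM
          have hmR : m ∈ R := by
            have := hMB hmM
            rw [hB, Finset.mem_filter] at this
            exact this.1
          have hmS : m ∉ S := by
            intro hmS
            rcases (hSmem m).mp hmS with h | h
            · exact (Finset.mem_sdiff.mp h).2 hmM
            · exact hLR m (hextraL h) hmR
          exact ⟨m, hmemD m hmS, hmv⟩
        · -- v has a neighbour in W
          have hvR : v ∈ R := hTR hvT
          rw [hB, Finset.mem_filter] at hvB
          push_neg at hvB
          obtain ⟨w', hw'mem, hw'W⟩ := hvB hvR
          rw [SimpleGraph.mem_neighborFinset] at hw'mem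
          have hw'L : w' ∉ L := hRnoleaf v hvR w' hw'mem
          have hw'S : w' ∉ S := hWnotS w' hw'W hw'L
          exact ⟨w', hmemD w' hw'S, hw'mem.symm⟩
      · -- v is a leaf in extra; its support is outside S
        have hvL : v ∈ L := hextraL hvextra
        rw [hL, Finset.mem_filter] at hvL
        obtain ⟨w', hw'⟩ := degree_pos_nbr (show 1 ≤ G.degree v by omega)
        have : w' ∉ S := hsupnotS v w' (by rw [hL, Finset.mem_filter]; exact hvL) hw'
        exact ⟨w', hmemD w' this, hw'.symm⟩
    · -- certified
      intro d hd
      rw [Finset.mem_sdiff] at hd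
      have hdS : d ∉ S := hd.2
      rw [sdiff_univ_sdiff]
      by_cases hdL : d ∈ L
      · -- d is a leaf not in extra : no neighbours in S
        left
        rw [Finset.card_eq_zero, Finset.eq_empty_iff_forall_notMem]
        intro t ht
        rw [Finset.mem_inter, SimpleGraph.mem_neighborFinset] at ht
        exact hsupnotS d t hdL ht.1 ht.2
      · by_cases hdW : d ∈ W
        · -- d is a support, with unique leaf ld
          have hdW' := hdW
          rw [hW, Finset.mem_filter] at hdW'
          have hcard1 : (leafNbrs G d).card = 1 := by
            have := hstrong d; omega
          obtain ⟨ld, hld⟩ := Finset.card_eq_one.mp hcard1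
          have hldmem : ld ∈ leafNbrs G d := by rw [hld]; simp
          simp only [leafNbrs, Finset.mem_filter, SimpleGraph.mem_neighborFinset] at hldmem
          obtain ⟨hadjld, hldleaf⟩ := hldmem
          have hldL : ld ∈ L := by rw [hL, Finset.mem_filter]; exact ⟨mem_univ _, hldleaf⟩
          -- the key dichotomy on (N(d) ∩ T).card
          rcases Nat.lt_or_ge (G.neighborFinset d ∩ T).card 2 with hlt | hge
          · rcases Nat.eq_zero_or_pos (G.neighborFinset d ∩ T).card with h0 | h1
            · -- no T-neighbours : then no S-neighbours at all
              left
              rw [Finset.card_eq_zero, Finset.eq_empty_iff_forall_notMem]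
              intro t ht
              rw [Finset.mem_inter, SimpleGraph.mem_neighborFinset] at ht
              rcases (hSmem t).mp ht.2 with hT' | hex
              · have : t ∈ G.neighborFinset d ∩ T := by
                  rw [Finset.mem_inter, SimpleGraph.mem_neighborFinset]; exact ⟨ht.1, hT'⟩
                rw [Finset.card_eq_zero.mp h0] at this
                simp at this
              · -- t is a leaf neighbour of d, so t = ld, but ld ∉ extra
                have htL := hextraL hex
                rw [hL, Finset.mem_filter] at htL
                have htld : t = ld := by
                  have : t ∈ leafNbrs G d := by
                    simp only [leafNbrs, Finset.mem_filter, SimpleGraph.mem_neighborFinset]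
                    exact ⟨ht.1, htL.2⟩
                  rw [hld, Finset.mem_singleton] at this
                  exact this
                subst htld
                -- t ∈ extra gives a witness w2 ∈ N(t) with (N(w2) ∩ T).card = 1; w2 = d
                rw [hextra, Finset.mem_filter] at hex
                obtain ⟨w2, hw2mem, hw2⟩ := hex.2
                rw [SimpleGraph.mem_neighborFinset] at hw2mem
                have hw2d : w2 = d := leaf_eq htL.2 ht.1.symm hw2mem
                rw [hw2d] at hw2
                omega
            · -- exactly one T-neighbour t0 : then ld ∈ extra gives a second S-neighbour
              have hcT : (G.neighborFinset d ∩ T).card = 1 := by omega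
              obtain ⟨t0, ht0⟩ := Finset.card_eq_one.mp hcT
              have ht0mem : t0 ∈ G.neighborFinset d ∩ T := by rw [ht0]; simp
              rw [Finset.mem_inter, SimpleGraph.mem_neighborFinset] at ht0mem
              have hldextra : ld ∈ extra := by
                rw [hextra, Finset.mem_filter]
                refine ⟨hldL, d, ?_, hcT⟩
                rw [SimpleGraph.mem_neighborFinset]
                exact hadjld.symm
              right
              have hpair : ({t0, ld} : Finset V) ⊆ G.neighborFinset d ∩ S := by
                intro u hu
                rcases Finset.mem_insert.mp hu with rfl | hu
                · rw [Finset.mem_inter, SimpleGraph.mem_neighborFinset]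
                  exact ⟨ht0mem.1, (hSmem u).mpr (Or.inl ht0mem.2)⟩
                · rw [Finset.mem_singleton] at hu
                  subst hu
                  rw [Finset.mem_inter, SimpleGraph.mem_neighborFinset]
                  exact ⟨hadjld, (hSmem u).mpr (Or.inr hldextra)⟩
              have hne : t0 ≠ ld := by
                intro h
                exact hLR ld hldL (hTR (h ▸ ht0mem.2))
              have := Finset.card_le_card hpair
              rwa [Finset.card_pair hne] at this
          · -- at least two T-neighbours
            right
            have hsub : G.neighborFinset d ∩ T ⊆ G.neighborFinset d ∩ S := by
              intro u hu
              rw [Finset.mem_inter] at hu ⊢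
              exact ⟨hu.1, (hSmem u).mpr (Or.inl hu.2)⟩
            have := Finset.card_le_card hsub
            omega
        · -- d ∈ R, hence d ∈ M; all its neighbours are in T
          have hdR : d ∈ R := by
            rw [hR, Finset.mem_filter]
            rw [hL, Finset.mem_filter] at hdL
            rw [hW, Finset.mem_filter] at hdW
            simp only [mem_univ, true_and, not_lt] at hdL hdW
            exact ⟨mem_univ d, hdL, by omega⟩
          have hdM : d ∈ M := by
            by_contra hdM
            exact hdS ((hSmem d).mpr (Or.inl (by rw [hT, Finset.mem_sdiff]; exact ⟨hdR, hdM⟩)))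
          have hdB : d ∈ B := hMB hdM
          right
          have hsub : G.neighborFinset d ⊆ G.neighborFinset d ∩ S := by
            intro y hy
            rw [SimpleGraph.mem_neighborFinset] at hy
            have hyR : y ∈ R := hBnbr d hdB y hy
            have hyM : y ∉ M := fun hyM => hMind d hdM y hyM hy
            rw [Finset.mem_inter, SimpleGraph.mem_neighborFinset]
            exact ⟨hy, (hSmem y).mpr (Or.inl (by rw [hT, Finset.mem_sdiff]; exact ⟨hyR, hyM⟩))⟩
          have h1 := Finset.card_le_card hsub
          have h2 := hRdeg d hdR
          rw [← SimpleGraph.card_neighborFinset_eq_degree] at h2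
          omega


lemma isolated_gammaCer_compl (G : SimpleGraph V) [DecidableRel G.Adj] [DecidableRel Gᶜ.Adj]
    (h5 : 5 ≤ Fintype.card V) {v : V} (h : G.degree v = 0) : gammaCer Gᶜ ≤ 1 := by
  have hiso : ∀ x, ¬ G.Adj v x := by
    intro x hx
    have hmem : x ∈ G.neighborFinset v := by simpa using hx
    rw [← SimpleGraph.card_neighborFinset_eq_degree] at h
    rw [Finset.card_eq_zero.mp h] at hmem
    simp at hmem
  have hcert : IsCertDomSet Gᶜ {v} := by
    constructor
    · intro x hx
      rw [Finset.mem_singleton] at hx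
      exact ⟨v, by simp, by rw [SimpleGraph.compl_adj]; exact ⟨Ne.symm hx, hiso x⟩⟩
    · intro u hu
      rw [Finset.mem_singleton] at hu
      subst hu
      right
      refine two_le_of_compl_subset (A := {u}) (by simp; omega) ?_
      intro x hx
      rw [Finset.mem_singleton] at hx
      simp only [Finset.mem_sdiff, SimpleGraph.mem_neighborFinset, SimpleGraph.compl_adj,
        Finset.mem_singleton]
      exact ⟨⟨Ne.symm hx, hiso x⟩, hx⟩
  have := gammaCer_le Gᶜ hcert
  simpa using this

lemma main_half (G : SimpleGraph V) [DecidableRel G.Adj] [DecidableRel Gᶜ.Adj]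
    (h5 : 5 ≤ Fintype.card V) (hb : gammaCer Gᶜ ≤ 2) :
    gammaCer G + gammaCer Gᶜ ≤ Fintype.card V + 2 ∧
    gammaCer G * gammaCer Gᶜ ≤ 2 * Fintype.card V ∧
    (gammaCer G + gammaCer Gᶜ = Fintype.card V + 2 ↔
      gammaCer G * gammaCer Gᶜ = 2 * Fintype.card V) ∧
    (gammaCer G + gammaCer Gᶜ = Fintype.card V + 2 ↔
      ((∀ v : V, IsLeaf G v ∨ IsWeakSupport G v) ∨
        (∀ v : V, IsLeaf Gᶜ v ∨ IsWeakSupport Gᶜ v))) := by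
  have han : gammaCer G ≤ Fintype.card V := gammaCer_le_card G
  -- the equality case characterisation
  have hE : (gammaCer G = Fintype.card V ∧ gammaCer Gᶜ = 2) ↔
      ((∀ v : V, IsLeaf G v ∨ IsWeakSupport G v) ∨
        (∀ v : V, IsLeaf Gᶜ v ∨ IsWeakSupport Gᶜ v)) := by
    constructor
    · rintro ⟨hA, hB⟩
      left
      by_contra hnc
      -- G has no isolated vertices since gammaCer Gᶜ = 2
      have hδ : ∀ v, 1 ≤ G.degree v := by
        intro v
        by_contra hv
        push_neg at hv
        have := isolated_gammaCer_compl G h5 (v := v) (by omega)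
        omega
      have := noncorona_le G hδ hnc
      omega
    · rintro (hc | hc)
      · exact ⟨corona_gammaCer G hc, corona_gammaCer_compl G h5 hc⟩
      · -- corona of the complement : impossible since gammaCer Gᶜ ≤ 2 < 5
        exfalso
        have := corona_gammaCer Gᶜ hc
        omega
  have hEq : (gammaCer G + gammaCer Gᶜ = Fintype.card V + 2) ↔
      (gammaCer G = Fintype.card V ∧ gammaCer Gᶜ = 2) := by
    constructor
    · intro h; omega
    · intro h; omega
  have hEq2 : (gammaCer G * gammaCer Gᶜ = 2 * Fintype.card V) ↔
      (gammaCer G = Fintype.card V ∧ gammaCer Gᶜ = 2) := by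
    constructor
    · intro h
      have h3 : gammaCer Gᶜ = 0 ∨ gammaCer Gᶜ = 1 ∨ gammaCer Gᶜ = 2 := by omega
      rcases h3 with h3 | h3 | h3 <;> rw [h3] at h ⊢
      · omega
      · omega
      · omega
    · rintro ⟨h1, h2⟩
      rw [h1, h2]; ring
  refine ⟨by omega, ?_, hEq.trans hEq2.symm, hEq.trans hE⟩
  have : gammaCer G * gammaCer Gᶜ ≤ gammaCer G * 2 := Nat.mul_le_mul_left _ hb
  omega

theorem nordhausGaddum (G : SimpleGraph V) [DecidableRel G.Adj]
    (hcard : 5 ≤ Fintype.card V) :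
    gammaCer G + gammaCer Gᶜ ≤ Fintype.card V + 2 ∧
    gammaCer G * gammaCer Gᶜ ≤ 2 * Fintype.card V ∧
    (gammaCer G + gammaCer Gᶜ = Fintype.card V + 2 ↔
      gammaCer G * gammaCer Gᶜ = 2 * Fintype.card V) ∧
    (gammaCer G + gammaCer Gᶜ = Fintype.card V + 2 ↔
      ((∀ v : V, IsLeaf G v ∨ IsWeakSupport G v) ∨
        (∀ v : V, IsLeaf Gᶜ v ∨ IsWeakSupport Gᶜ v))) := by
  have hcc : gammaCer Gᶜᶜ = gammaCer G := gammaCer_congr (compl_compl G)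
  by_cases ha : 3 ≤ gammaCer G
  · by_cases hb : 3 ≤ gammaCer Gᶜ
    · -- both certified domination numbers are at least 3
      have hδG : ∀ v, 2 ≤ G.degree v := mindeg_two G hcard ha hb
      have hδGc : ∀ v, 2 ≤ Gᶜ.degree v := mindeg_two Gᶜ hcard hb (by omega)
      have haeq : gammaCer G = gamma G :=
        le_antisymm (gammaCer_le_gamma G hδG) (gamma_le_gammaCer G)
      have hbeq : gammaCer Gᶜ = gamma Gᶜ :=
        le_antisymm (gammaCer_le_gamma Gᶜ hδGc) (gamma_le_gammaCer Gᶜ)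
      obtain ⟨hsum, hprod⟩ := key_bounds G (by omega) (by omega)
      rw [← haeq, ← hbeq] at hsum hprod
      have hnc1 : ¬ (∀ v : V, IsLeaf G v ∨ IsWeakSupport G v) := by
        intro hc
        have := corona_gammaCer_compl G hcard hc
        omega
      have hnc2 : ¬ (∀ v : V, IsLeaf Gᶜ v ∨ IsWeakSupport Gᶜ v) := by
        intro hc
        have := corona_gammaCer_compl Gᶜ hcard hc
        omega
      refine ⟨by omega, by omega, ?_, ?_⟩
      · constructor
        · intro h; omega
        · intro h; omega
      · constructor
        · intro h; omega
        · rintro (hc | hc)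
          · exact absurd hc hnc1
          · exact absurd hc hnc2
    · exact main_half G hcard (by omega)
  · -- gammaCer G ≤ 2 : apply the helper to the complement
    obtain ⟨h1, h2, h3, h4⟩ := main_half Gᶜ hcard (by omega)
    rw [hcc] at h1 h2 h3 h4
    rw [corona_congr (compl_compl G)] at h4
    refine ⟨by omega, by rw [mul_comm]; exact h2, ?_, ?_⟩
    · rw [add_comm, mul_comm]; exact h3
    · rw [add_comm]
      exact h4.trans (Or.comm)
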